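/- Let G be a graph with n vertices, let k, ℓ be positive integers, and let α, β be proper k-colourings of G. Define A_0 = {v : α(v) ≠ β(v)} and, for i ≥ 1, A_i = ⋃_{u ∈ A_{i-1}} {v ∈ N(u) : |{w ∈ N(u) : α(w) = α(v)}| ≤ ℓ}. If there exists a recolouring sequence of length ℓ from α to β, then |A_0| ≤ ℓ, and the set A* = A_0 ∪ A_1 ∪ ... ∪ A_{ℓ-1} satisfies |A*| ≤ ℓ · (k·ℓ)^ℓ. -/
import Mathlib

lemma geom_le_aux (r n : ℕ) (hr : 2 ≤ r) : ∑ i ∈ Finset.range n, r ^ i ≤ r ^ n := by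
  induction n with
  | zero => simp
  | succ n ih =>
    rw [Finset.sum_range_succ, pow_succ]
    calc (∑ i ∈ Finset.range n, r ^ i) + r ^ n ≤ r ^ n + r ^ n := by omega
    _ = r ^ n * 2 := by ring
    _ ≤ r ^ n * r := Nat.mul_le_mul_left _ hr

/-- if a recolouring sequence of length `ℓ` between proper
`k`-colourings `α` and `β` exists, then `|A₀| ≤ ℓ` and
`|A*| = |A₀ ∪ … ∪ A_{ℓ-1}| ≤ ℓ·(kℓ)^ℓ`, where `A₀` is the disagreement set of
`α` and `β` and `A_{i} = ⋃_{u ∈ A_{i-1}} {v ∈ N(u) : |N(u,v)| ≤ ℓ}`. -/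
theorem stmt_3 {V : Type*} [Fintype V] [DecidableEq V] (G : SimpleGraph V)
    [DecidableRel G.Adj] (k ℓ : ℕ) (hk : 0 < k) (hℓ : 0 < ℓ)
    (α β : V → Fin k)
    (hα : ∀ u v : V, G.Adj u v → α u ≠ α v)
    (hβ : ∀ u v : V, G.Adj u v → β u ≠ β v)
    (A : ℕ → Finset V)
    (hA0 : A 0 = Finset.univ.filter (fun v : V => α v ≠ β v))
    (hAi : ∀ i : ℕ, A (i + 1) = (A i).biUnion (fun u =>
      (G.neighborFinset u).filter (fun v =>
        ((G.neighborFinset u).filter (fun w => α w = α v)).card ≤ ℓ)))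
    (c : ℕ → V → Fin k) (hc0 : c 0 = α) (hcℓ : c ℓ = β)
    (hproper : ∀ q ≤ ℓ, ∀ u v : V, G.Adj u v → c q u ≠ c q v)
    (hstep : ∀ q < ℓ, ∃ x : V, ∀ v : V, v ≠ x → c q v = c (q + 1) v) :
    (A 0).card ≤ ℓ ∧ ((Finset.range ℓ).biUnion A).card ≤ ℓ * (k * ℓ) ^ ℓ := by
  -- Part 1: disagreement set grows by at most one per step.
  have hdis : ∀ q, q ≤ ℓ →
      (Finset.univ.filter (fun v : V => c 0 v ≠ c q v)).card ≤ q := by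
    intro q
    induction q with
    | zero => simp
    | succ q ih =>
      intro hq
      obtain ⟨x, hx⟩ := hstep q (by omega)
      have hsub : Finset.univ.filter (fun v : V => c 0 v ≠ c (q+1) v) ⊆
          insert x (Finset.univ.filter (fun v : V => c 0 v ≠ c q v)) := by
        intro v hv
        simp only [Finset.mem_filter, Finset.mem_univ, true_and] at hv
        by_cases h : v = x
        · simp [h]
        · simp only [Finset.mem_insert, Finset.mem_filter, Finset.mem_univ, true_and]
          exact Or.inr (fun hcon => hv (hcon.trans (hx v h)))
      calc (Finset.univ.filter (fun v : V => c 0 v ≠ c (q+1) v)).card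
          ≤ (insert x (Finset.univ.filter (fun v : V => c 0 v ≠ c q v))).card :=
            Finset.card_le_card hsub
        _ ≤ (Finset.univ.filter (fun v : V => c 0 v ≠ c q v)).card + 1 :=
            Finset.card_insert_le _ _
        _ ≤ q + 1 := by have := ih (by omega); omega
  have hA0card : (A 0).card ≤ ℓ := by
    have := hdis ℓ le_rfl
    rw [hc0, hcℓ] at this
    rw [hA0]; exact this
  -- Each vertex contributes at most k*ℓ new vertices.
  have hstepcard : ∀ u : V, ((G.neighborFinset u).filter (fun v =>
      ((G.neighborFinset u).filter (fun w => α w = α v)).card ≤ ℓ)).card ≤ k * ℓ := by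
    intro u
    set N := G.neighborFinset u with hN
    have hsub : N.filter (fun v => (N.filter (fun w => α w = α v)).card ≤ ℓ) ⊆
        Finset.univ.biUnion (fun col : Fin k =>
          if (N.filter (fun w => α w = col)).card ≤ ℓ
          then N.filter (fun w => α w = col) else ∅) := by
      intro v hv
      simp only [Finset.mem_filter] at hv
      refine Finset.mem_biUnion.2 ⟨α v, Finset.mem_univ _, ?_⟩
      rw [if_pos hv.2]
      exact Finset.mem_filter.2 ⟨hv.1, rfl⟩
    calc (N.filter (fun v => (N.filter (fun w => α w = α v)).card ≤ ℓ)).card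
        ≤ (Finset.univ.biUnion (fun col : Fin k =>
          if (N.filter (fun w => α w = col)).card ≤ ℓ
          then N.filter (fun w => α w = col) else ∅)).card := Finset.card_le_card hsub
      _ ≤ ∑ col : Fin k, (if (N.filter (fun w => α w = col)).card ≤ ℓ
          then N.filter (fun w => α w = col) else ∅).card := Finset.card_biUnion_le
      _ ≤ ∑ _col : Fin k, ℓ := by
          apply Finset.sum_le_sum
          intro col _
          split
          · assumption
          · simp
      _ = k * ℓ := by simp [Finset.sum_const, mul_comm]
  -- Bound on each layer.
  have hcard : ∀ i, (A i).card ≤ ℓ * (k * ℓ) ^ i := by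
    intro i
    induction i with
    | zero => simpa using hA0card
    | succ i ih =>
      rw [hAi i]
      calc ((A i).biUnion (fun u => (G.neighborFinset u).filter (fun v =>
              ((G.neighborFinset u).filter (fun w => α w = α v)).card ≤ ℓ))).card
          ≤ ∑ u ∈ A i, ((G.neighborFinset u).filter (fun v =>
              ((G.neighborFinset u).filter (fun w => α w = α v)).card ≤ ℓ)).card :=
            Finset.card_biUnion_le
        _ ≤ ∑ _u ∈ A i, (k * ℓ) := Finset.sum_le_sum (fun u _ => hstepcard u)
        _ = (A i).card * (k * ℓ) := by simp [Finset.sum_const, mul_comm]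
        _ ≤ (ℓ * (k * ℓ) ^ i) * (k * ℓ) := Nat.mul_le_mul_right _ ih
        _ = ℓ * (k * ℓ) ^ (i + 1) := by ring
  refine ⟨hA0card, ?_⟩
  have hgeom : ∑ i ∈ Finset.range ℓ, (k * ℓ) ^ i ≤ (k * ℓ) ^ ℓ := by
    rcases Nat.lt_or_ge (k * ℓ) 2 with h | h
    · have hk1 : k = 1 := by nlinarith
      have hℓ1 : ℓ = 1 := by nlinarith
      subst hk1; subst hℓ1; simp
    · exact geom_le_aux _ _ h
  calc ((Finset.range ℓ).biUnion A).card
      ≤ ∑ i ∈ Finset.range ℓ, (A i).card := Finset.card_biUnion_le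
    _ ≤ ∑ i ∈ Finset.range ℓ, ℓ * (k * ℓ) ^ i := Finset.sum_le_sum (fun i _ => hcard i)
    _ = ℓ * ∑ i ∈ Finset.range ℓ, (k * ℓ) ^ i := by rw [Finset.mul_sum]
    _ ≤ ℓ * (k * ℓ) ^ ℓ := Nat.mul_le_mul_left _ hgeom
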